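/- Let A and B be finite sets, R ⊆ A × B, P and P' probability measures on A and B, and ε ≥ 0. Then there exists a coupling Q of P and P' with Q(R) ≥ 1 − ε if and only if P(U) ≤ P'(N_R(U)) + ε for all U ⊆ A. -/

import Mathlib

open Finset
open scoped Classical

section Gale
variable {A B : Type*} [Fintype A] [Fintype B]

inductive Reach (P : A → ℝ) (R : A → B → Prop) (Q : A × B → ℝ) : A ⊕ B → Prop
  | base (a : A) : (∑ b, Q (a, b)) < P a → Reach P R Q (Sum.inl a)
  | fwd (a : A) (b : B) : Reach P R Q (Sum.inl a) → R a b → Reach P R Q (Sum.inr b)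
  | back (a : A) (b : B) : Reach P R Q (Sum.inr b) → 0 < Q (a, b) → Reach P R Q (Sum.inl a)

lemma sum_ite_pair_b (a' a : A) (b : B) (γ : ℝ) :
    ∑ b', (if (a', b') = (a, b) then γ else 0) = if a' = a then γ else 0 := by
  rcases eq_or_ne a' a with rfl | h
  · simp [Prod.ext_iff]
  · simp [Prod.ext_iff, h]

lemma sum_ite_pair_a (b' b : B) (a : A) (γ : ℝ) :
    ∑ a', (if (a', b') = (a, b) then γ else 0) = if b' = b then γ else 0 := by
  rcases eq_or_ne b' b with rfl | h
  · simp [Prod.ext_iff]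
  · simp [Prod.ext_iff, h]

def MotA (P : A → ℝ) (R : A → B → Prop) (Q : A × B → ℝ) (a : A) : Prop :=
  ∃ δ > (0:ℝ), ∃ K ≥ (0:ℝ), ∀ γ : ℝ, 0 ≤ γ → γ ≤ δ → ∃ Q' : A × B → ℝ,
    (∀ p, 0 ≤ Q' p) ∧ (∀ a' b', Q' (a', b') ≠ 0 → R a' b') ∧
    (∀ a', ∑ b, Q' (a', b) ≤ P a') ∧ ((∑ b, Q' (a, b)) ≤ P a - γ) ∧
    (∀ b, ∑ a', Q' (a', b) = ∑ a', Q (a', b)) ∧ (∀ p, Q p - K * γ ≤ Q' p)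

def MotB (P : A → ℝ) (R : A → B → Prop) (Q : A × B → ℝ) (b : B) : Prop :=
  ∃ δ > (0:ℝ), ∃ K ≥ (0:ℝ), ∀ γ : ℝ, 0 ≤ γ → γ ≤ δ → ∃ Q' : A × B → ℝ,
    (∀ p, 0 ≤ Q' p) ∧ (∀ a' b', Q' (a', b') ≠ 0 → R a' b') ∧
    (∀ a', ∑ b', Q' (a', b') ≤ P a') ∧
    (∀ b', b' ≠ b → ∑ a', Q' (a', b') = ∑ a', Q (a', b')) ∧
    ((∑ a', Q' (a', b)) = (∑ a', Q (a', b)) + γ) ∧ (∀ p, Q p - K * γ ≤ Q' p)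

lemma reach_augment (P : A → ℝ) (R : A → B → Prop) (Q : A × B → ℝ)
    (hQ0 : ∀ p, 0 ≤ Q p) (hsupp : ∀ a b, Q (a, b) ≠ 0 → R a b)
    (hrow : ∀ a, ∑ b, Q (a, b) ≤ P a) :
    ∀ x, Reach P R Q x → Sum.elim (MotA P R Q) (MotB P R Q) x := by
  intro x hx
  induction hx with
  | base a h =>
      exact ⟨P a - ∑ b, Q (a, b), by linarith, 0, le_refl _,
        fun γ h0 hδ => ⟨Q, hQ0, hsupp, hrow, by linarith, fun b => rfl,
          fun p => by simp⟩⟩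
  | fwd a b ha hR ih =>
      obtain ⟨δ, hδ, K, hK, hgen⟩ := ih
      refine ⟨δ, hδ, K, hK, fun γ h0 hγ => ?_⟩
      obtain ⟨Q', h1, h2, h3, h4, h5, h6⟩ := hgen γ h0 hγ
      refine ⟨fun p => Q' p + if p = (a, b) then γ else 0, ?_, ?_, ?_, ?_, ?_, ?_⟩
      · intro p; have := h1 p; positivity
      · intro a' b' hne
        by_cases hp : (a', b') = (a, b)
        · rw [Prod.mk.injEq] at hp; obtain ⟨rfl, rfl⟩ := hp; exact hR
        · exact h2 a' b' (by simpa [hp] using hne)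
      · intro a'
        rw [Finset.sum_add_distrib, sum_ite_pair_b]
        rcases eq_or_ne a' a with rfl | h
        · simpa using by linarith [h4]
        · simpa [h] using h3 a'
      · intro b' hb'
        rw [Finset.sum_add_distrib, sum_ite_pair_a]
        simpa [hb'] using h5 b'
      · rw [Finset.sum_add_distrib, sum_ite_pair_a]
        simpa using h5 b
      · intro p
        have hh := h6 p
        have hite : (0:ℝ) ≤ if p = (a,b) then γ else 0 := by positivity
        dsimp only
        linarith
  | back a b hb hpos ih =>
      obtain ⟨δ, hδ, K, hK, hgen⟩ := ih
      refine ⟨min δ (Q (a, b) / (K + 1)), lt_min hδ (by positivity), K + 1, by linarith,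
        fun γ h0 hγ => ?_⟩
      have hγδ : γ ≤ δ := hγ.trans (min_le_left _ _)
      have hγQ : (K + 1) * γ ≤ Q (a, b) := by
        have := hγ.trans (min_le_right _ _)
        rw [le_div_iff₀ (by linarith : (0:ℝ) < K + 1)] at this
        linarith
      obtain ⟨Q', h1, h2, h3, h4, h5, h6⟩ := hgen γ h0 hγδ
      have hQ'ab : γ ≤ Q' (a, b) := by
        have := h6 (a, b); nlinarith
      refine ⟨fun p => Q' p - if p = (a, b) then γ else 0, ?_, ?_, ?_, ?_, ?_, ?_⟩
      · intro p
        by_cases hp : p = (a, b)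
        · subst hp; simpa using by linarith
        · simpa [hp] using h1 p
      · intro a' b' hne
        by_cases hp : (a', b') = (a, b)
        · rw [Prod.mk.injEq] at hp; obtain ⟨rfl, rfl⟩ := hp
          exact hsupp _ _ hpos.ne'
        · exact h2 a' b' (by simpa [hp] using hne)
      · intro a'
        rw [Finset.sum_sub_distrib, sum_ite_pair_b]
        rcases eq_or_ne a' a with rfl | h
        · simpa using by linarith [h3 a']
        · simpa [h] using h3 a'
      · rw [Finset.sum_sub_distrib, sum_ite_pair_b]
        simpa using by linarith [h3 a]
      · intro b'
        rw [Finset.sum_sub_distrib, sum_ite_pair_a]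
        rcases eq_or_ne b' b with rfl | h
        · simpa using by linarith [h5]
        · simpa [h] using h4 b' h
      · intro p
        have h6p := h6 p
        have hite : (if p = (a,b) then γ else 0) ≤ γ := by
          split <;> linarith
        have : Q p - (K+1) * γ ≤ Q' p - γ := by nlinarith
        have h2' : Q' p - γ ≤ Q' p - (if p = (a,b) then γ else 0) := by linarith
        dsimp only
        linarith


lemma gale (P : A → ℝ) (P' : B → ℝ) (R : A → B → Prop)
    (hP0 : ∀ a, 0 ≤ P a) (hP'0 : ∀ b, 0 ≤ P' b)
    (hsum : ∑ a, P a = ∑ b, P' b)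
    (hall : ∀ (U : Finset A) (V : Finset B), (∀ a ∈ U, ∀ b, R a b → b ∈ V) →
      ∑ a ∈ U, P a ≤ ∑ b ∈ V, P' b) :
    ∃ Q : A × B → ℝ, (∀ p, 0 ≤ Q p) ∧ (∀ a b, Q (a, b) ≠ 0 → R a b) ∧
      (∀ a, ∑ b, Q (a, b) = P a) ∧ (∀ b, ∑ a, Q (a, b) = P' b) := by
  classical
  set S : Set (A × B → ℝ) := {Q | (∀ p, 0 ≤ Q p) ∧ (∀ p : A × B, ¬ R p.1 p.2 → Q p = 0) ∧
    (∀ a, ∑ b, Q (a, b) ≤ P a) ∧ (∀ b, ∑ a, Q (a, b) ≤ P' b)} with hSdef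
  -- S is closed
  have hclosed : IsClosed S := by
    have c1 : IsClosed {Q : A × B → ℝ | ∀ p, 0 ≤ Q p} := by
      rw [Set.setOf_forall]
      exact isClosed_iInter fun p => isClosed_le continuous_const (continuous_apply p)
    have c2 : IsClosed {Q : A × B → ℝ | ∀ p : A × B, ¬ R p.1 p.2 → Q p = 0} := by
      rw [Set.setOf_forall]
      refine isClosed_iInter fun p => ?_
      by_cases hp : R p.1 p.2
      · simpa [hp] using isClosed_univ
      · simpa [hp] using isClosed_eq (continuous_apply p) continuous_const
    have c3 : IsClosed {Q : A × B → ℝ | ∀ a, ∑ b, Q (a, b) ≤ P a} := by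
      rw [Set.setOf_forall]
      exact isClosed_iInter fun a => isClosed_le
        (continuous_finset_sum _ fun b _ => continuous_apply (a, b)) continuous_const
    have c4 : IsClosed {Q : A × B → ℝ | ∀ b, ∑ a, Q (a, b) ≤ P' b} := by
      rw [Set.setOf_forall]
      exact isClosed_iInter fun b => isClosed_le
        (continuous_finset_sum _ fun a _ => continuous_apply (a, b)) continuous_const
    rw [hSdef, Set.setOf_and, Set.setOf_and, Set.setOf_and]
    exact c1.inter (c2.inter (c3.inter c4))
  have hcomp : IsCompact S := by
    refine (isCompact_univ_pi (fun p : A × B => isCompact_Icc (a := (0:ℝ)) (b := P p.1))).of_isClosed_subset hclosed ?_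
    intro Q hQ
    intro p _
    refine ⟨hQ.1 p, ?_⟩
    have := Finset.single_le_sum (f := fun b => Q (p.1, b)) (fun b _ => hQ.1 (p.1, b)) (mem_univ p.2)
    calc Q p = Q (p.1, p.2) := by rw [Prod.mk.eta]
      _ ≤ ∑ b, Q (p.1, b) := this
      _ ≤ P p.1 := hQ.2.2.1 p.1
  have h0S : (0 : A × B → ℝ) ∈ S := by
    refine ⟨fun p => le_refl 0, fun p _ => rfl, ?_, ?_⟩ <;> intro x <;> simp [hP0, hP'0]
  obtain ⟨Q, hQS, hmax⟩ := hcomp.exists_isMaxOn ⟨0, h0S⟩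
    ((continuous_finset_sum univ fun p _ => continuous_apply p).continuousOn
      (s := S) (f := fun Q : A × B → ℝ => ∑ p, Q p))
  obtain ⟨hQ0, hQR, hQrow, hQcol⟩ := hQS
  have hsupp : ∀ a b, Q (a, b) ≠ 0 → R a b := fun a b h => by
    by_contra hR; exact h (hQR (a, b) hR)
  -- every reachable column is saturated
  have hsat : ∀ b, Reach P R Q (Sum.inr b) → ∑ a, Q (a, b) = P' b := by
    intro b hb
    by_contra hne
    have hlt : ∑ a, Q (a, b) < P' b := (hQcol b).lt_of_ne hne
    have hmot := reach_augment P R Q hQ0 hsupp hQrow (Sum.inr b) hb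
    obtain ⟨δ, hδ, K, hK, hgen⟩ := hmot
    set γ := min δ (P' b - ∑ a, Q (a, b)) with hγdef
    have hγ0 : 0 < γ := lt_min hδ (by linarith)
    obtain ⟨Q', h1, h2, h3, h4, h5, h6⟩ := hgen γ hγ0.le (min_le_left _ _)
    have hQ'S : Q' ∈ S := by
      refine ⟨h1, fun p hp => ?_, h3, ?_⟩
      · by_contra h; exact hp (h2 p.1 p.2 (by simpa using h))
      · intro b'
        rcases eq_or_ne b' b with rfl | h
        · rw [h5]
          have : γ ≤ P' b' - ∑ a, Q (a, b') := min_le_right _ _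
          linarith
        · rw [h4 b' h]; exact hQcol b'
    have htot : ∑ p, Q' p > ∑ p, Q p := by
      rw [Fintype.sum_prod_type_right, Fintype.sum_prod_type_right]
      apply Finset.sum_lt_sum
      · intro b' _
        rcases eq_or_ne b' b with rfl | h
        · rw [h5]; linarith
        · rw [h4 b' h]
      · exact ⟨b, mem_univ b, by rw [h5]; linarith⟩

    exact absurd (hmax hQ'S) (not_le.mpr htot)
  -- all rows are saturated
  have hrow_eq : ∀ a, ∑ b, Q (a, b) = P a := by
    intro a₀
    by_contra hne
    have hlt : ∑ b, Q (a₀, b) < P a₀ := (hQrow a₀).lt_of_ne hne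
    set U : Finset A := univ.filter (fun a => Reach P R Q (Sum.inl a)) with hUdef
    have ha₀U : a₀ ∈ U := by simp [hUdef]; exact Reach.base a₀ hlt
    set NU : Finset B := univ.filter (fun b => ∃ a ∈ U, R a b) with hNUdef
    have hNU_reach : ∀ b ∈ NU, Reach P R Q (Sum.inr b) := by
      intro b hb
      rw [hNUdef, mem_filter] at hb
      obtain ⟨-, a, ha, hR⟩ := hb
      rw [hUdef, mem_filter] at ha
      exact Reach.fwd a b ha.2 hR
    have key : ∑ b ∈ NU, P' b < ∑ a ∈ U, P a := by
      have e1 : ∑ b ∈ NU, P' b = ∑ b ∈ NU, ∑ a, Q (a, b) :=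
        Finset.sum_congr rfl fun b hb => (hsat b (hNU_reach b hb)).symm
      have e2 : ∀ b ∈ NU, ∑ a, Q (a, b) = ∑ a ∈ U, Q (a, b) := by
        intro b hb
        refine (Finset.sum_subset (subset_univ U) ?_).symm
        intro a _ haU
        by_contra h
        exact haU (by simp [hUdef]; exact Reach.back a b (hNU_reach b hb) ((hQ0 (a,b)).lt_of_ne (Ne.symm h)))
      have e3 : ∑ b ∈ NU, ∑ a ∈ U, Q (a, b) = ∑ a ∈ U, ∑ b ∈ NU, Q (a, b) := Finset.sum_comm
      have e4 : ∀ a ∈ U, ∑ b ∈ NU, Q (a, b) ≤ ∑ b, Q (a, b) := by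
        intro a _
        exact Finset.sum_le_sum_of_subset_of_nonneg (subset_univ NU) (fun b _ _ => hQ0 (a, b))
      have e5 : ∑ a ∈ U, ∑ b, Q (a, b) < ∑ a ∈ U, P a :=
        Finset.sum_lt_sum (fun a _ => hQrow a) ⟨a₀, ha₀U, hlt⟩
      calc ∑ b ∈ NU, P' b = ∑ b ∈ NU, ∑ a ∈ U, Q (a, b) := by
            rw [e1]; exact Finset.sum_congr rfl e2
        _ = ∑ a ∈ U, ∑ b ∈ NU, Q (a, b) := e3
        _ ≤ ∑ a ∈ U, ∑ b, Q (a, b) := Finset.sum_le_sum e4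
        _ < ∑ a ∈ U, P a := e5
    have hclo : ∀ a ∈ U, ∀ b, R a b → b ∈ NU := by
      intro a ha b hab
      rw [hNUdef, mem_filter]
      exact ⟨mem_univ _, a, ha, hab⟩
    exact absurd (hall U NU hclo) (not_le.mpr key)
  -- columns are saturated by mass balance
  have hcol_eq : ∀ b, ∑ a, Q (a, b) = P' b := by
    have hbal : ∑ b, (P' b - ∑ a, Q (a, b)) = 0 := by
      have : ∑ b, ∑ a, Q (a, b) = ∑ a, ∑ b, Q (a, b) := Finset.sum_comm
      rw [Finset.sum_sub_distrib, this]
      simp only [hrow_eq]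
      linarith [hsum]
    intro b
    have := (Finset.sum_eq_zero_iff_of_nonneg (fun b _ => by linarith [hQcol b])).mp hbal b (mem_univ b)
    linarith
  exact ⟨Q, hQ0, hsupp, hrow_eq, hcol_eq⟩

end Gale

set_option maxHeartbeats 1000000 in
/-- Strassen's theorem with deficiency. -/
theorem stmt5 {A B : Type*} [Fintype A] [Fintype B]
    (P : A → ℝ) (P' : B → ℝ) (R : A → B → Prop) (ε : ℝ) (hε : 0 ≤ ε)
    (hP0 : ∀ a, 0 ≤ P a) (hP1 : ∑ a, P a = 1)
    (hP'0 : ∀ b, 0 ≤ P' b) (hP'1 : ∑ b, P' b = 1) :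
    (∃ Q : A × B → ℝ, (∀ p, 0 ≤ Q p) ∧
        (∀ a, ∑ b, Q (a, b) = P a) ∧ (∀ b, ∑ a, Q (a, b) = P' b) ∧
        1 - ε ≤ ∑ p ∈ univ.filter (fun p : A × B => R p.1 p.2), Q p) ↔
      ∀ U : Finset A, ∑ a ∈ U, P a ≤
        (∑ b ∈ univ.filter (fun b => ∃ a ∈ U, R a b), P' b) + ε := by
  classical
  constructor
  · rintro ⟨Q, hQ0, hrow, hcol, hR⟩ U
    have htot : ∑ p : A × B, Q p = 1 := by
      rw [Fintype.sum_prod_type]; simp only [hrow]; exact hP1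
    have hsplit := Finset.sum_filter_add_sum_filter_not univ (fun p : A × B => R p.1 p.2) Q
    have hRc : ∑ p ∈ univ.filter (fun p : A × B => ¬ R p.1 p.2), Q p ≤ ε := by linarith
    have hUe : ∑ a ∈ U, P a = ∑ p ∈ U ×ˢ univ, Q p := by
      rw [Finset.sum_product]; exact (Finset.sum_congr rfl fun a _ => (hrow a).symm)
    have hsplitU := Finset.sum_filter_add_sum_filter_not (U ×ˢ univ) (fun p : A × B => R p.1 p.2) Q
    have h1 : ∑ p ∈ (U ×ˢ univ).filter (fun p : A × B => R p.1 p.2), Q p ≤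
        ∑ b ∈ univ.filter (fun b => ∃ a ∈ U, R a b), P' b := by
      have hsub : (U ×ˢ univ).filter (fun p : A × B => R p.1 p.2) ⊆
          univ ×ˢ univ.filter (fun b => ∃ a ∈ U, R a b) := by
        intro p hp
        rw [Finset.mem_filter, Finset.mem_product] at hp
        rw [Finset.mem_product, Finset.mem_filter]
        exact ⟨mem_univ _, mem_univ _, p.1, hp.1.1, hp.2⟩
      calc ∑ p ∈ (U ×ˢ univ).filter (fun p : A × B => R p.1 p.2), Q p
          ≤ ∑ p ∈ univ ×ˢ univ.filter (fun b => ∃ a ∈ U, R a b), Q p :=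
            Finset.sum_le_sum_of_subset_of_nonneg hsub (fun p _ _ => hQ0 p)
        _ = ∑ b ∈ univ.filter (fun b => ∃ a ∈ U, R a b), ∑ a, Q (a, b) := by
            rw [Finset.sum_product]; exact Finset.sum_comm
        _ = ∑ b ∈ univ.filter (fun b => ∃ a ∈ U, R a b), P' b :=
            Finset.sum_congr rfl fun b _ => hcol b
    have h2 : ∑ p ∈ (U ×ˢ univ).filter (fun p : A × B => ¬ R p.1 p.2), Q p ≤ ε := by
      refine le_trans (Finset.sum_le_sum_of_subset_of_nonneg ?_ (fun p _ _ => hQ0 p)) hRc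
      exact Finset.filter_subset_filter _ (subset_univ _)
    linarith
  · intro hU
    have hε1 : (0:ℝ) < 1 + ε := by linarith
    set Pt : Option A → ℝ := fun x => Option.elim x (ε / (1 + ε)) (fun a => P a / (1 + ε)) with hPtdef
    set Pt' : Option B → ℝ := fun y => Option.elim y (ε / (1 + ε)) (fun b => P' b / (1 + ε)) with hPt'def
    set Rt : Option A → Option B → Prop := fun x y =>
      x = none ∨ y = none ∨ ∃ a b, x = some a ∧ y = some b ∧ R a b with hRtdef
    have hPt0 : ∀ x, 0 ≤ Pt x := by
      rintro (_ | a)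
      · exact div_nonneg hε hε1.le
      · exact div_nonneg (hP0 a) hε1.le
    have hPt'0 : ∀ y, 0 ≤ Pt' y := by
      rintro (_ | b)
      · exact div_nonneg hε hε1.le
      · exact div_nonneg (hP'0 b) hε1.le
    have hPt1 : ∑ x, Pt x = 1 := by
      rw [Fintype.sum_option]
      show ε / (1 + ε) + ∑ a, P a / (1 + ε) = 1
      rw [← Finset.sum_div, hP1]
      field_simp
      ring
    have hPt'1 : ∑ y, Pt' y = 1 := by
      rw [Fintype.sum_option]
      show ε / (1 + ε) + ∑ b, P' b / (1 + ε) = 1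
      rw [← Finset.sum_div, hP'1]
      field_simp
      ring
    -- Hall condition for the extended system
    have hallt : ∀ (Ut : Finset (Option A)) (V : Finset (Option B)),
        (∀ x ∈ Ut, ∀ y, Rt x y → y ∈ V) → ∑ x ∈ Ut, Pt x ≤ ∑ y ∈ V, Pt' y := by
      intro Ut V hclo
      by_cases hn : none ∈ Ut
      · have hfull : V = univ := by
          refine Finset.eq_univ_of_forall fun y => ?_
          exact hclo none hn y (Or.inl rfl)
        rw [hfull]
        calc ∑ x ∈ Ut, Pt x ≤ ∑ x, Pt x :=
              Finset.sum_le_sum_of_subset_of_nonneg (subset_univ _) (fun x _ _ => hPt0 x)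
          _ = 1 := hPt1
          _ = ∑ y, Pt' y := hPt'1.symm
      · set U : Finset A := univ.filter (fun a => some a ∈ Ut) with hUdef
        have hUt : Ut = U.image some := by
          ext x
          cases x with
          | none => simp [hn]
          | some a => simp [hUdef]
        rcases U.eq_empty_or_nonempty with hUe | ⟨a₁, ha₁⟩
        · rw [hUt, hUe]
          simpa using Finset.sum_nonneg (fun y _ => hPt'0 y)
        · have lhs_eq : ∑ x ∈ Ut, Pt x = (∑ a ∈ U, P a) / (1 + ε) := by
            rw [hUt, Finset.sum_image (fun a _ a' _ h => Option.some_injective A h)]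
            show (∑ a ∈ U, P a / (1 + ε)) = (∑ a ∈ U, P a) / (1 + ε)
            rw [← Finset.sum_div]
          have ha₁Ut : some a₁ ∈ Ut := by rw [hUt]; exact Finset.mem_image_of_mem some ha₁
          have hsub : insert none ((univ.filter (fun b => ∃ a ∈ U, R a b)).image some) ⊆ V := by
            intro y hy
            rw [Finset.mem_insert] at hy
            rcases hy with rfl | hy
            · exact hclo (some a₁) ha₁Ut none (Or.inr (Or.inl rfl))
            · rw [Finset.mem_image] at hy
              obtain ⟨b, hb, rfl⟩ := hy
              rw [mem_filter] at hb
              obtain ⟨-, a, ha, hab⟩ := hb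
              exact hclo (some a) (by rw [hUt]; exact Finset.mem_image_of_mem some ha)
                (some b) (Or.inr (Or.inr ⟨a, b, rfl, rfl, hab⟩))
          have rhs_ge : ε / (1 + ε) + (∑ b ∈ univ.filter (fun b => ∃ a ∈ U, R a b), P' b) / (1 + ε)
              ≤ ∑ y ∈ V, Pt' y := by
            have e1 : ∑ y ∈ insert none ((univ.filter (fun b => ∃ a ∈ U, R a b)).image some), Pt' y
                = ε / (1 + ε) + (∑ b ∈ univ.filter (fun b => ∃ a ∈ U, R a b), P' b) / (1 + ε) := by
              rw [Finset.sum_insert (by simp),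
                Finset.sum_image (fun b _ b' _ h => Option.some_injective B h)]
              show ε / (1 + ε) + ∑ b ∈ univ.filter (fun b => ∃ a ∈ U, R a b), P' b / (1 + ε)
                = ε / (1 + ε) + (∑ b ∈ univ.filter (fun b => ∃ a ∈ U, R a b), P' b) / (1 + ε)
              rw [← Finset.sum_div]
            rw [← e1]
            exact Finset.sum_le_sum_of_subset_of_nonneg hsub (fun y _ _ => hPt'0 y)
          rw [lhs_eq]
          refine le_trans ?_ rhs_ge
          rw [← add_div]
          exact (div_le_div_iff_of_pos_right hε1).mpr (by linarith [hU U])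
    obtain ⟨Qt, hQt0, hQtR, hQtrow, hQtcol⟩ := gale Pt Pt' Rt hPt0 hPt'0 (by rw [hPt1, hPt'1]) hallt
    -- extract pieces
    have hqrow : ∀ a, ∑ b, (1 + ε) * Qt (some a, some b) = P a - (1 + ε) * Qt (some a, none) := by
      intro a
      have h := hQtrow (some a)
      rw [Fintype.sum_option] at h
      have : ∑ b, Qt (some a, some b) = P a / (1 + ε) - Qt (some a, none) := by
        rw [show Pt (some a) = P a / (1 + ε) from rfl] at h
        linarith
      rw [← Finset.mul_sum, this]
      field_simp
    have hqcol : ∀ b, ∑ a, (1 + ε) * Qt (some a, some b) = P' b - (1 + ε) * Qt (none, some b) := by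
      intro b
      have h := hQtcol (some b)
      rw [Fintype.sum_option] at h
      have : ∑ a, Qt (some a, some b) = P' b / (1 + ε) - Qt (none, some b) := by
        rw [show Pt' (some b) = P' b / (1 + ε) from rfl] at h
        linarith
      rw [← Finset.mul_sum, this]
      field_simp
    have hrAcol : ∑ a, Qt (some a, none) = ε / (1 + ε) - Qt (none, none) := by
      have h := hQtcol none
      rw [Fintype.sum_option] at h
      rw [show Pt' none = ε / (1 + ε) from rfl] at h
      linarith
    have hrBrow : ∑ b, Qt (none, some b) = ε / (1 + ε) - Qt (none, none) := by
      have h := hQtrow none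
      rw [Fintype.sum_option] at h
      rw [show Pt none = ε / (1 + ε) from rfl] at h
      linarith
    set rA : A → ℝ := fun a => (1 + ε) * Qt (some a, none) with hrAdef
    set rB : B → ℝ := fun b => (1 + ε) * Qt (none, some b) with hrBdef
    have hrA0 : ∀ a, 0 ≤ rA a := fun a => mul_nonneg hε1.le (hQt0 _)
    have hrB0 : ∀ b, 0 ≤ rB b := fun b => mul_nonneg hε1.le (hQt0 _)
    have hsA : ∑ a, rA a = ε - (1 + ε) * Qt (none, none) := by
      rw [hrAdef, ← Finset.mul_sum, hrAcol]
      field_simp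
    have hsB : ∑ b, rB b = ε - (1 + ε) * Qt (none, none) := by
      rw [hrBdef, ← Finset.mul_sum, hrBrow]
      field_simp
    have hsle : ∑ a, rA a ≤ ε := by
      rw [hsA]
      nlinarith [hQt0 ((none : Option A), (none : Option B)), hε1]
    have hs0 : 0 ≤ ∑ a, rA a := Finset.sum_nonneg fun a _ => hrA0 a
    have hqsupp : ∀ p : A × B, Qt (some p.1, some p.2) ≠ 0 → R p.1 p.2 := by
      intro p h
      have := hQtR (some p.1) (some p.2) h
      rw [hRtdef] at this
      rcases this with h' | h' | ⟨a, b, ha, hb, hab⟩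
      · exact absurd h' (by simp)
      · exact absurd h' (by simp)
      · cases Option.some_injective _ ha
        cases Option.some_injective _ hb
        exact hab
    have hqtot : ∀ q : A × B → ℝ, (∀ p, q p = (1 + ε) * Qt (some p.1, some p.2)) →
        1 - ε ≤ ∑ p ∈ univ.filter (fun p : A × B => R p.1 p.2), q p := by
      intro q hqdef
      have hfil : ∑ p ∈ univ.filter (fun p : A × B => R p.1 p.2), q p = ∑ p : A × B, q p := by
        refine Finset.sum_subset (Finset.filter_subset _ _) ?_
        intro p _ hp
        rw [Finset.mem_filter] at hp
        push_neg at hp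
        have hnR := hp (mem_univ p)
        rw [hqdef]
        rcases eq_or_ne (Qt (some p.1, some p.2)) 0 with h | h
        · rw [h]; ring
        · exact absurd (hqsupp p h) hnR
      rw [hfil]
      have : ∑ p : A × B, q p = ∑ a, (P a - rA a) := by
        rw [Fintype.sum_prod_type]
        refine Finset.sum_congr rfl fun a _ => ?_
        rw [← hqrow a]
        exact Finset.sum_congr rfl fun b _ => hqdef (a, b)
      rw [this, Finset.sum_sub_distrib, hP1, hsA]
      nlinarith [hQt0 ((none : Option A), (none : Option B)), hε1]
    by_cases hs : ∑ a, rA a = 0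
    · -- no leftover mass
      have hrAz : ∀ a, rA a = 0 := fun a =>
        (Finset.sum_eq_zero_iff_of_nonneg (fun a _ => hrA0 a)).mp hs a (mem_univ a)
      have hrBz : ∀ b, rB b = 0 := fun b =>
        (Finset.sum_eq_zero_iff_of_nonneg (fun b _ => hrB0 b)).mp (by rw [hsB, ← hsA, hs]) b (mem_univ b)
      refine ⟨fun p => (1 + ε) * Qt (some p.1, some p.2), fun p => mul_nonneg hε1.le (hQt0 _),
        ?_, ?_, hqtot _ (fun p => rfl)⟩
      · intro a
        have := hqrow a
        have hz := hrAz a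
        rw [hrAdef] at hz
        simp only at hz
        rw [this, hz]
        ring
      · intro b
        have := hqcol b
        have hz := hrBz b
        rw [hrBdef] at hz
        simp only at hz
        rw [this, hz]
        ring
    · have hspos : 0 < ∑ a, rA a := lt_of_le_of_ne hs0 (Ne.symm hs)
      refine ⟨fun p => (1 + ε) * Qt (some p.1, some p.2) + rA p.1 * rB p.2 / (∑ a, rA a),
        ?_, ?_, ?_, ?_⟩
      · intro p
        have := mul_nonneg hε1.le (hQt0 (some p.1, some p.2))
        have := div_nonneg (mul_nonneg (hrA0 p.1) (hrB0 p.2)) hspos.le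
        positivity
      · intro a
        rw [Finset.sum_add_distrib, hqrow a]
        have : ∑ b, rA a * rB b / (∑ a, rA a) = rA a * (∑ b, rB b) / (∑ a, rA a) := by
          simp only [← Finset.sum_div, ← Finset.mul_sum]
        rw [this, hsB, ← hsA, mul_div_assoc, div_self hs]
        ring
      · intro b
        rw [Finset.sum_add_distrib, hqcol b]
        have : ∑ a', rA a' * rB b / (∑ a, rA a) = (∑ a, rA a) * rB b / (∑ a, rA a) := by
          simp only [← Finset.sum_div, ← Finset.sum_mul]
        rw [this, mul_comm (∑ a, rA a) (rB b), mul_div_assoc, div_self hs]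
        ring
      · have hbase := hqtot (fun p => (1 + ε) * Qt (some p.1, some p.2)) (fun p => rfl)
        refine le_trans hbase (Finset.sum_le_sum fun p _ => ?_)
        have := div_nonneg (mul_nonneg (hrA0 p.1) (hrB0 p.2)) hspos.le
        linarith
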